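/- Under these hypotheses the modular operator is covariant with respect to the coaction, with a κ²-twist: F(Θ(q)) = (Θ ⊗ κ²)(F(q)) for all q ∈ B, where κ² = κ ∘ κ. -/

import Mathlib

open TensorProduct

/-- the modular operator is covariant with respect to the coaction, with a
`κ²`-twist: `F (Θ q) = (Θ ⊗ κ²) (F q)` for all `q : B`, where `κ² = κ ∘ κ` and `κ` is the
(bijective) antipode of the Hopf algebra `A`. -/
theorem modular_operator_coaction_covariance
    {A : Type*} [Ring A] [HopfAlgebra ℂ A]
    (hκ : Function.Bijective (HopfAlgebra.antipode (R := ℂ) (A := A)))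
    {B : Type*} [Ring B] [Algebra ℂ B]
    (F : B →ₐ[ℂ] B ⊗[ℂ] A)
    -- coassociativity of the coaction: (F ⊗ id) ∘ F = (id ⊗ Δ) ∘ F
    (hF1 : ∀ b : B,
      (TensorProduct.assoc ℂ B A A) ((LinearMap.rTensor A F.toLinearMap) (F b)) =
        (LinearMap.lTensor B (Coalgebra.comul (R := ℂ) (A := A))) (F b))
    -- counit axiom of the coaction: (id ⊗ ε) ∘ F = id
    (hF2 : ∀ b : B,
      (TensorProduct.rid ℂ B) ((LinearMap.lTensor B (Coalgebra.counit (R := ℂ) (A := A))) (F b)) = b)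
    (ω : B →ₗ[ℂ] ℂ)
    (hnondeg : ∀ x : B, (∀ b : B, ω (x * b) = 0) → x = 0)
    (Θ : B →ₗ[ℂ] B)
    (hmod : ∀ f g : B, ω (f * g) = ω (Θ g * f))
    -- invariance property: Σ ω(b q₍₀₎) κ(q₍₁₎) = Σ ω(b₍₀₎ q) b₍₁₎
    (hinv : ∀ b q : B,
      ((TensorProduct.lid ℂ A).toLinearMap ∘ₗ
        TensorProduct.map (ω ∘ₗ LinearMap.mulLeft ℂ b)
          (HopfAlgebra.antipode (R := ℂ) (A := A))) (F q) =
      ((TensorProduct.lid ℂ A).toLinearMap ∘ₗ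
        TensorProduct.map (ω ∘ₗ LinearMap.mulRight ℂ q) LinearMap.id) (F b)) :
    ∀ q : B, F (Θ q) =
      (TensorProduct.map Θ
        ((HopfAlgebra.antipode (R := ℂ) (A := A)) ∘ₗ (HopfAlgebra.antipode (R := ℂ) (A := A))))
        (F q) := by
  classical
  set κA : A →ₗ[ℂ] A := HopfAlgebra.antipode (R := ℂ) (A := A) with hκA
  -- contraction with an element after applying a map to the second leg
  have hcontr : ∀ (f : B →ₗ[ℂ] ℂ) (g h : A →ₗ[ℂ] A) (t : B ⊗[ℂ] A),
      h ((TensorProduct.lid ℂ A) (TensorProduct.map f g t)) =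
        (TensorProduct.lid ℂ A) (TensorProduct.map f (h ∘ₗ g) t) := by
    intro f g h t
    induction t using TensorProduct.induction_on with
    | zero => simp
    | tmul x a => simp
    | add x y hx hy => simp [map_add, hx, hy]
  -- separation lemma
  have sep : ∀ t : B ⊗[ℂ] A,
      (∀ b : B, (TensorProduct.lid ℂ A)
        (TensorProduct.map (ω ∘ₗ LinearMap.mulRight ℂ b) LinearMap.id t) = 0) → t = 0 := by
    intro t ht
    let 𝒷 := Module.Free.chooseBasis ℂ A
    let e : B ⊗[ℂ] A ≃ₗ[ℂ] (Module.Free.ChooseBasisIndex ℂ A →₀ B) :=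
      (LinearEquiv.lTensor B 𝒷.repr).trans
        (TensorProduct.finsuppScalarRight ℂ ℂ B (Module.Free.ChooseBasisIndex ℂ A))
    have key : ∀ (b : B) (i : Module.Free.ChooseBasisIndex ℂ A) (t : B ⊗[ℂ] A),
        𝒷.repr ((TensorProduct.lid ℂ A)
          (TensorProduct.map (ω ∘ₗ LinearMap.mulRight ℂ b) LinearMap.id t)) i =
        ω ((e t) i * b) := by
      intro b i t
      induction t using TensorProduct.induction_on with
      | zero => simp only [map_zero, Finsupp.coe_zero, Pi.zero_apply, zero_mul]
      | tmul x a =>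
          simp [e, TensorProduct.lid_tmul, smul_mul_assoc, map_smul, smul_eq_mul, mul_comm]
      | add x y hx hy => simp [map_add, hx, hy, add_mul]
    have he : e t = 0 := by
      ext i
      refine hnondeg _ (fun b => ?_)
      have := key b i t
      rw [ht b] at this
      simpa using this.symm
    have := e.map_eq_zero_iff.mp he
    exact this
  intro q
  -- functional rewrites from hmod
  have hf1 : ∀ b : B, (ω ∘ₗ LinearMap.mulLeft ℂ b) = (ω ∘ₗ LinearMap.mulRight ℂ b) ∘ₗ Θ := by
    intro b; ext x; simpa using hmod b x
  have hf2 : (ω ∘ₗ LinearMap.mulRight ℂ q) = ω ∘ₗ LinearMap.mulLeft ℂ (Θ q) := by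
    ext x; simpa using hmod x q
  -- main pointwise identity
  have main : ∀ b : B,
      (TensorProduct.lid ℂ A) (TensorProduct.map (ω ∘ₗ LinearMap.mulRight ℂ b) LinearMap.id
        (TensorProduct.map Θ (κA ∘ₗ κA) (F q) - F (Θ q))) = 0 := by
    intro b
    rw [map_sub, map_sub]
    have e1 := hinv b q
    simp only [LinearMap.comp_apply, LinearEquiv.coe_coe] at e1
    -- apply κA to both sides of e1
    have e2 : κA ((TensorProduct.lid ℂ A)
        (TensorProduct.map (ω ∘ₗ LinearMap.mulLeft ℂ b) κA (F q))) =
        κA ((TensorProduct.lid ℂ A)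
        (TensorProduct.map (ω ∘ₗ LinearMap.mulRight ℂ q) LinearMap.id (F b))) :=
      congrArg κA e1
    -- LHS of e2 equals contraction of (Θ ⊗ κ²)(F q)
    have lhs : κA ((TensorProduct.lid ℂ A)
        (TensorProduct.map (ω ∘ₗ LinearMap.mulLeft ℂ b) κA (F q))) =
        (TensorProduct.lid ℂ A) (TensorProduct.map (ω ∘ₗ LinearMap.mulRight ℂ b) LinearMap.id
          (TensorProduct.map Θ (κA ∘ₗ κA) (F q))) := by
      rw [hcontr, hf1]
      have : TensorProduct.map ((ω ∘ₗ LinearMap.mulRight ℂ b) ∘ₗ Θ) (κA ∘ₗ κA) =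
          (TensorProduct.map (ω ∘ₗ LinearMap.mulRight ℂ b) LinearMap.id) ∘ₗ
            (TensorProduct.map Θ (κA ∘ₗ κA)) := by
        rw [← TensorProduct.map_comp, LinearMap.id_comp]
      rw [this, LinearMap.comp_apply]
    -- RHS of e2 equals contraction of F (Θ q), via hinv (Θ q) b
    have rhs : κA ((TensorProduct.lid ℂ A)
        (TensorProduct.map (ω ∘ₗ LinearMap.mulRight ℂ q) LinearMap.id (F b))) =
        (TensorProduct.lid ℂ A) (TensorProduct.map (ω ∘ₗ LinearMap.mulRight ℂ b) LinearMap.id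
          (F (Θ q))) := by
      rw [hcontr, hf2, LinearMap.comp_id]
      have e3 := hinv (Θ q) b
      simp only [LinearMap.comp_apply, LinearEquiv.coe_coe] at e3
      exact e3
    rw [lhs, rhs] at e2
    rw [e2, sub_self]
  have := sep _ main
  have h0 := sub_eq_zero.mp this
  exact h0.symm
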